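/- arXiv:math/0609130 — 3 statements merged into one kernel-verified Lean document; each statement's English description precedes it below -/
import Mathlib

section
/- For positive semidefinite matrices A and B of the same size, A² + B² ≥ ((A+B)/2)^{1/2} (A + B) ((A+B)/2)^{1/2} in the Loewner (positive semidefinite) order. -/
open scoped ComplexOrder Matrix

/-- `eigDesc M j` : the `j`-th largest (0-indexed) real part of the eigenvalues
(roots of the characteristic polynomial, with multiplicity) of `M`. -/
noncomputable def eigDesc {m : Type*} [Fintype m] [DecidableEq m]
    (M : Matrix m m ℂ) (j : ℕ) : ℝ :=
  ((M.charpoly.roots.map Complex.re).sort (· ≥ ·)).getD j 0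

/-- `svalDesc K j` : the `j`-th largest (0-indexed) singular value of `K`. -/
noncomputable def svalDesc {m n : Type*} [Fintype m] [Fintype n] [DecidableEq n]
    (K : Matrix m n ℂ) (j : ℕ) : ℝ :=
  Real.sqrt (eigDesc (Kᴴ * K) j)

/-- Real power of a Hermitian matrix, via the functional calculus. -/
noncomputable def Matrix.IsHermitian.rpow {n : Type*} [Fintype n] [DecidableEq n]
    {A : Matrix n n ℂ} (hA : A.IsHermitian) (r : ℝ) : Matrix n n ℂ :=
  hA.cfc (fun x => x ^ r)

/-- The positive semidefinite square root of a positive semidefinite matrix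
(the definition `Matrix.PosSemidef.sqrt` of the older Mathlib, since removed). -/
noncomputable def Matrix.PosSemidef.sqrt {n 𝕜 : Type*} [Fintype n] [RCLike 𝕜] [DecidableEq n]
    {A : Matrix n n 𝕜} (hA : A.PosSemidef) : Matrix n n 𝕜 :=
  hA.1.eigenvectorUnitary.1 * Matrix.diagonal ((↑) ∘ (√·) ∘ hA.1.eigenvalues) *
    (star hA.1.eigenvectorUnitary : Matrix n n 𝕜)

lemma Matrix.PosSemidef.sqrt_mul_self {n 𝕜 : Type*} [Fintype n] [RCLike 𝕜] [DecidableEq n]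
    {A : Matrix n n 𝕜} (hA : A.PosSemidef) : hA.sqrt * hA.sqrt = A := by
  have hU : (star hA.1.eigenvectorUnitary : Matrix n n 𝕜) * hA.1.eigenvectorUnitary.1 = 1 :=
    Unitary.coe_star_mul_self _
  have hD : Matrix.diagonal (((↑) ∘ (√·) ∘ hA.1.eigenvalues : n → 𝕜)) *
      Matrix.diagonal ((↑) ∘ (√·) ∘ hA.1.eigenvalues) =
      Matrix.diagonal (RCLike.ofReal ∘ hA.1.eigenvalues) := by
    rw [Matrix.diagonal_mul_diagonal]
    congr 1; funext i
    simp only [Function.comp]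
    rw [← RCLike.ofReal_mul, Real.mul_self_sqrt (hA.eigenvalues_nonneg i)]
  unfold Matrix.PosSemidef.sqrt
  conv_rhs => rw [hA.1.spectral_theorem, Unitary.conjStarAlgAut_apply]
  calc _ = hA.1.eigenvectorUnitary.1 * (Matrix.diagonal ((↑) ∘ (√·) ∘ hA.1.eigenvalues) *
        ((star hA.1.eigenvectorUnitary : Matrix n n 𝕜) * hA.1.eigenvectorUnitary.1) *
        Matrix.diagonal ((↑) ∘ (√·) ∘ hA.1.eigenvalues)) *
        (star hA.1.eigenvectorUnitary : Matrix n n 𝕜) := by simp only [Matrix.mul_assoc]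
    _ = _ := by rw [hU, Matrix.mul_one, hD]

lemma aux_smul_psd {n : ℕ} {P : Matrix (Fin n) (Fin n) ℂ} (hP : P.PosSemidef)
    {c : ℂ} (hc : 0 ≤ c) : (c • P).PosSemidef := by
  have hcs : star c = c := by
    rw [RCLike.star_def, Complex.conj_eq_iff_im]; exact (Complex.nonneg_iff.mp hc).2.symm
  constructor
  · show (c • P)ᴴ = c • P
    rw [Matrix.conjTranspose_smul, hP.1, hcs]
  · intro x
    exact (hP.smul hc).2 x

theorem sq_add_sq_ge_sqrt_mean_conj {n : ℕ} {A B : Matrix (Fin n) (Fin n) ℂ}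
    (hA : A.PosSemidef) (hB : B.PosSemidef)
    (hM : ((2 : ℂ)⁻¹ • (A + B)).PosSemidef) :
    (A ^ 2 + B ^ 2 - hM.sqrt * (A + B) * hM.sqrt).PosSemidef := by
  set S := hM.sqrt with hSdef
  have hSS : S * S = (2:ℂ)⁻¹ • (A + B) := hM.sqrt_mul_self
  have h2 : A + B = (2:ℂ) • (S * S) := by rw [hSS, smul_smul]; norm_num
  have key : S * (A + B) * S = (2:ℂ)⁻¹ • ((A + B) * (A + B)) := by
    calc S * (A + B) * S = (2:ℂ) • (S * (S * S) * S) := by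
          rw [← Matrix.smul_mul, ← Matrix.mul_smul, ← h2]
      _ = (2:ℂ) • ((S * S) * (S * S)) := by rw [mul_assoc, mul_assoc, ← mul_assoc S S]
      _ = (2:ℂ) • (((2:ℂ)⁻¹ • (A + B)) * ((2:ℂ)⁻¹ • (A + B))) := by rw [hSS]
      _ = (2:ℂ)⁻¹ • ((A + B) * (A + B)) := by
          rw [Matrix.smul_mul, Matrix.mul_smul, smul_smul, smul_smul]; norm_num
  have heq : A ^ 2 + B ^ 2 - S * (A + B) * S = (2:ℂ)⁻¹ • ((A - B)ᴴ * (A - B)) := by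
    rw [key, Matrix.conjTranspose_sub, hA.1, hB.1]
    have h2' : (2:ℂ) ≠ 0 := two_ne_zero
    apply smul_right_injective (Matrix (Fin n) (Fin n) ℂ) h2'
    simp only [smul_sub, smul_add, smul_smul, mul_inv_cancel₀ h2', one_smul, two_smul]
    noncomm_ring
  rw [heq]
  exact aux_smul_psd (Matrix.posSemidef_conjTranspose_mul_self _)
    (by rw [Complex.nonneg_iff]; norm_num)
end

section
/- For positive semidefinite matrices A and B and any real r with 0 ≤ r ≤ 1, A^{r+1} + B^{r+1} ≥ ((A+B)/2)^{1/2} (A^r + B^r) ((A+B)/2)^{1/2} in the Loewner order. -/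
open scoped ComplexOrder Matrix

open MeasureTheory Set

namespace RpowIneq

variable {r : ℝ}

noncomputable def phi (r l : ℝ) : ℝ → ℝ := fun t => t ^ (r - 1) * (l / (l + t))

noncomputable def Kr (r : ℝ) : ℝ := ∫ t in Ioi (0:ℝ), phi r 1 t

lemma phi_contOn (r l : ℝ) (hl : 0 ≤ l) : ContinuousOn (phi r l) (Ioi 0) := by
  apply ContinuousOn.mul
  · exact fun t ht => (Real.continuousAt_rpow_const t (r-1) (Or.inl (ne_of_gt ht))).continuousWithinAt
  · apply ContinuousOn.div continuousOn_const (by fun_prop)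
    intro t ht
    have : (0:ℝ) < l + t := by have := mem_Ioi.mp ht; linarith
    exact ne_of_gt this

lemma phi_nonneg (r : ℝ) {l t : ℝ} (hl : 0 ≤ l) (ht : 0 < t) : 0 ≤ phi r l t := by
  apply mul_nonneg (Real.rpow_nonneg ht.le _)
  positivity

lemma phi_integrableOn (hr0 : 0 < r) (hr1 : r < 1) {l : ℝ} (hl : 0 ≤ l) :
    IntegrableOn (phi r l) (Ioi 0) := by
  have hmeas : ∀ s ⊆ Ioi (0:ℝ), MeasurableSet s → AEStronglyMeasurable (phi r l) (volume.restrict s) :=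
    fun s hs hms => ((phi_contOn r l hl).mono hs).aestronglyMeasurable hms
  have h1 : IntegrableOn (phi r l) (Ioc 0 1) := by
    have hb : IntegrableOn (fun t : ℝ => t ^ (r - 1)) (Ioc 0 1) := by
      have := intervalIntegral.intervalIntegrable_rpow' (a := 0) (b := 1) (r := r - 1) (by linarith)
      rwa [intervalIntegrable_iff_integrableOn_Ioc_of_le (by norm_num)] at this
    apply Integrable.mono hb (hmeas _ Ioc_subset_Ioi_self measurableSet_Ioc)
    filter_upwards [ae_restrict_mem measurableSet_Ioc] with t ht
    rw [Real.norm_eq_abs, Real.norm_eq_abs, abs_of_nonneg (phi_nonneg r hl ht.1),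
      abs_of_nonneg (Real.rpow_nonneg ht.1.le _)]
    have hlt : (0:ℝ) < l + t := by linarith [ht.1]
    have : l / (l + t) ≤ 1 := div_le_one_of_le₀ (by linarith [ht.1]) hlt.le
    calc phi r l t ≤ t ^ (r-1) * 1 := by
          exact mul_le_mul_of_nonneg_left this (Real.rpow_nonneg ht.1.le _)
      _ = t ^ (r-1) := mul_one _
  have h2 : IntegrableOn (phi r l) (Ioi 1) := by
    have hb : IntegrableOn (fun t : ℝ => l * t ^ (r - 2)) (Ioi 1) :=
      (integrableOn_Ioi_rpow_of_lt (by linarith) one_pos).const_mul l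
    apply Integrable.mono hb (hmeas _ (fun t ht => mem_Ioi.mpr (lt_trans one_pos (mem_Ioi.mp ht))) measurableSet_Ioi)
    filter_upwards [ae_restrict_mem measurableSet_Ioi] with t ht
    have ht0 : (0:ℝ) < t := lt_trans one_pos ht
    rw [Real.norm_eq_abs, Real.norm_eq_abs, abs_of_nonneg (phi_nonneg r hl ht0),
      abs_of_nonneg (by positivity : (0:ℝ) ≤ l * t ^ (r-2))]
    have hlt : (0:ℝ) < l + t := by linarith
    have hdiv : l / (l + t) ≤ l / t :=
      div_le_div_of_nonneg_left hl ht0 (by linarith)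
    calc phi r l t ≤ t ^ (r-1) * (l / t) :=
          mul_le_mul_of_nonneg_left hdiv (Real.rpow_nonneg ht0.le _)
      _ = l * t ^ (r-2) := by
          rw [div_eq_mul_inv, ← Real.rpow_neg_one t]
          rw [← mul_assoc, mul_comm _ l, mul_assoc, ← Real.rpow_add ht0]
          congr 1
          ring
  have : Ioc (0:ℝ) 1 ∪ Ioi 1 = Ioi 0 := Ioc_union_Ioi_eq_Ioi (by norm_num)
  rw [← this]
  exact h1.union h2


lemma phi_integral (hr0 : 0 < r) (hr1 : r < 1) {l : ℝ} (hl : 0 < l) :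
    ∫ t in Ioi (0:ℝ), phi r l t = l ^ r * Kr r := by
  have key : (∫ s in Ioi (0:ℝ), phi r l (l * s)) = l⁻¹ • ∫ t in Ioi (l * 0), phi r l t :=
    MeasureTheory.integral_comp_mul_left_Ioi (phi r l) 0 hl
  rw [mul_zero] at key
  have congr1 : (∫ s in Ioi (0:ℝ), phi r l (l * s)) = ∫ s in Ioi (0:ℝ), l ^ (r-1) * phi r 1 s := by
    apply setIntegral_congr_fun measurableSet_Ioi
    intro s hs
    have hs0 : (0:ℝ) < s := hs
    have h1s : (0:ℝ) < 1 + s := by linarith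
    simp only [phi]
    rw [Real.mul_rpow hl.le hs0.le]
    have : l + l * s = l * (1 + s) := by ring
    rw [this]
    rw [show l / (l * (1 + s)) = 1 / (1 + s) by
      field_simp]
    ring
  rw [congr1, MeasureTheory.integral_const_mul] at key
  have : ∫ t in Ioi (0:ℝ), phi r l t = l * (l^(r-1) * Kr r) := by
    rw [smul_eq_mul] at key
    field_simp [Kr] at key ⊢
    unfold Kr
    linarith [key]
  rw [this, ← mul_assoc]
  congr 1
  rw [← Real.rpow_one_add' hl.le ?_]
  · congr 1; ring
  · intro h; rw [show (1:ℝ) + (r-1) = r by ring] at h; exact (ne_of_gt hr0) h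

lemma Kr_pos (hr0 : 0 < r) (hr1 : r < 1) : 0 < Kr r := by
  rw [Kr, setIntegral_pos_iff_support_of_nonneg_ae]
  · apply lt_of_lt_of_le _ (measure_mono (?_ : Ioi (1:ℝ) ⊆ _))
    · rw [Real.volume_Ioi]; exact ENNReal.zero_lt_top
    · intro t ht
      have ht0 : (0:ℝ) < t := lt_trans one_pos ht
      constructor
      · simp only [Function.mem_support, phi]
        have h1t : (0:ℝ) < 1 + t := by linarith
        positivity
      · exact ht0
  · filter_upwards [ae_restrict_mem measurableSet_Ioi] with t ht
    exact phi_nonneg r zero_le_one ht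
  · exact phi_integrableOn hr0 hr1 zero_le_one



variable {n : ℕ} {A : Matrix (Fin n) (Fin n) ℂ}

section cfcAPI
variable (hA : A.IsHermitian)

local notation "V" => (Matrix.IsHermitian.eigenvectorUnitary hA : Matrix (Fin n) (Fin n) ℂ)

lemma V_mul_star : V * star V = 1 :=
  Matrix.mem_unitaryGroup_iff.mp (Matrix.IsHermitian.eigenvectorUnitary hA).2

lemma star_mul_V : star V * V = 1 :=
  Matrix.mem_unitaryGroup_iff'.mp (Matrix.IsHermitian.eigenvectorUnitary hA).2

lemma cfc_def (f : ℝ → ℝ) : hA.cfc f =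
    V * Matrix.diagonal (fun k => (f (hA.eigenvalues k) : ℂ)) * star V := rfl

lemma cfc_add' (f g : ℝ → ℝ) : hA.cfc (fun x => f x + g x) = hA.cfc f + hA.cfc g := by
  simp only [cfc_def]
  have : (Matrix.diagonal (fun k => ((f (hA.eigenvalues k) + g (hA.eigenvalues k) : ℝ) : ℂ)))
      = Matrix.diagonal (fun k => ((f (hA.eigenvalues k) : ℝ) : ℂ))
        + Matrix.diagonal (fun k => ((g (hA.eigenvalues k) : ℝ) : ℂ)) := by
    rw [Matrix.diagonal_add]
    have : (fun k => ((f (hA.eigenvalues k) + g (hA.eigenvalues k) : ℝ) : ℂ))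
        = fun k => ((f (hA.eigenvalues k) : ℝ) : ℂ) + ((g (hA.eigenvalues k) : ℝ) : ℂ) := by
      funext k; push_cast; ring
    rw [this]
  rw [this, Matrix.mul_add, Matrix.add_mul]

lemma cfc_mul' (f g : ℝ → ℝ) : hA.cfc (fun x => f x * g x) = hA.cfc f * hA.cfc g := by
  simp only [cfc_def]
  rw [show ∀ X Y D E : Matrix (Fin n) (Fin n) ℂ, X*D*Y*(X*E*Y) = X*(D*(Y*X)*E)*Y by
    intros; noncomm_ring]
  rw [star_mul_V, Matrix.mul_one, Matrix.diagonal_mul_diagonal]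
  congr 2
  funext k
  push_cast
  rfl

lemma cfc_smul' (c : ℝ) (f : ℝ → ℝ) :
    hA.cfc (fun x => c * f x) = (c : ℂ) • hA.cfc f := by
  simp only [cfc_def]
  have : (Matrix.diagonal (fun k => ((c * f (hA.eigenvalues k) : ℝ) : ℂ)))
      = (c : ℂ) • Matrix.diagonal (fun k => ((f (hA.eigenvalues k) : ℝ) : ℂ)) := by
    rw [← Matrix.diagonal_smul]
    have : (fun k => ((c * f (hA.eigenvalues k) : ℝ) : ℂ))
        = (c : ℂ) • fun k => ((f (hA.eigenvalues k) : ℝ) : ℂ) := by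
      funext k; simp
    rw [this]
  rw [this, Matrix.mul_smul, Matrix.smul_mul]

lemma cfc_one' : hA.cfc (fun _ => 1) = 1 := by
  have : hA.cfc (fun _ => 1) = V * 1 * star V := by
    rw [cfc_def]
    norm_num
  rw [this, Matrix.mul_one, V_mul_star]

lemma cfc_id' : hA.cfc (fun x => x) = A := by
  conv_rhs => rw [hA.spectral_theorem]
  rfl

lemma cfc_congr' {f g : ℝ → ℝ} (h : ∀ k, f (hA.eigenvalues k) = g (hA.eigenvalues k)) :
    hA.cfc f = hA.cfc g := by
  have : (fun k => ((f (hA.eigenvalues k) : ℝ) : ℂ)) = fun k => ((g (hA.eigenvalues k) : ℝ) : ℂ) := by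
    funext k
    rw [h k]
  simp only [cfc_def, this]

lemma cfc_herm (f : ℝ → ℝ) : (hA.cfc f).IsHermitian := by
  show _ᴴ = _
  rw [cfc_def, Matrix.conjTranspose_mul, Matrix.conjTranspose_mul,
    ← Matrix.star_eq_conjTranspose V, ← Matrix.star_eq_conjTranspose (star V), star_star,
    Matrix.diagonal_conjTranspose]
  rw [show star (fun k => ((f (hA.eigenvalues k) : ℝ) : ℂ)) = fun k => ((f (hA.eigenvalues k) : ℝ) : ℂ) by
    funext k
    simp [Pi.star_def, Complex.conj_ofReal]]
  rw [← Matrix.mul_assoc, Matrix.star_eq_conjTranspose]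

lemma cfc_psd {f : ℝ → ℝ} (h : ∀ k, 0 ≤ f (hA.eigenvalues k)) : (hA.cfc f).PosSemidef := by
  rw [cfc_def]
  have hd : (Matrix.diagonal (fun k => ((f (hA.eigenvalues k) : ℝ) : ℂ))).PosSemidef := by
    apply Matrix.PosSemidef.diagonal
    intro k
    show (0:ℂ) ≤ _
    rw [Complex.zero_le_real]
    exact h k
  have := hd.conjTranspose_mul_mul_same (star V)
  rwa [← Matrix.star_eq_conjTranspose (star V), star_star] at this

lemma cfc_quadform (f : ℝ → ℝ) (x : Fin n → ℂ) :
    star x ⬝ᵥ (hA.cfc f *ᵥ x) =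
      ∑ k, (f (hA.eigenvalues k) : ℂ) * (star ((star V *ᵥ x) k) * (star V *ᵥ x) k) := by
  have hstar : star x ᵥ* V = star (star V *ᵥ x) := by
    rw [Matrix.star_mulVec, ← Matrix.star_eq_conjTranspose, star_star]
  rw [cfc_def, ← Matrix.mulVec_mulVec, ← Matrix.mulVec_mulVec, Matrix.dotProduct_mulVec _ V, hstar]
  simp only [dotProduct, Matrix.mulVec_diagonal, Pi.star_apply]
  exact Finset.sum_congr rfl fun k _ => by ring

end cfcAPI

lemma _root_.Matrix.PosSemidef.sqrt_eq_cfc {A : Matrix (Fin n) (Fin n) ℂ} (hA : A.PosSemidef) :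
    hA.sqrt = hA.1.cfc Real.sqrt := rfl

lemma _root_.Matrix.PosSemidef.sqrt_mul_self_s2 {A : Matrix (Fin n) (Fin n) ℂ} (hA : A.PosSemidef) :
    hA.sqrt * hA.sqrt = A := by
  rw [hA.sqrt_eq_cfc, ← cfc_mul' hA.1,
    cfc_congr' hA.1 (f := fun x => Real.sqrt x * Real.sqrt x) (g := fun x => x)
      (fun k => Real.mul_self_sqrt (hA.eigenvalues_nonneg k)), cfc_id' hA.1]

lemma _root_.Matrix.PosSemidef.posSemidef_sqrt {A : Matrix (Fin n) (Fin n) ℂ} (hA : A.PosSemidef) :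
    hA.sqrt.PosSemidef := by
  rw [hA.sqrt_eq_cfc]
  exact cfc_psd hA.1 (fun k => Real.sqrt_nonneg _)

lemma psd_smul_real {N : Matrix (Fin n) (Fin n) ℂ} (hN : N.PosSemidef) {c : ℝ} (hc : 0 ≤ c) :
    ((c : ℂ) • N).PosSemidef := by
  refine Matrix.posSemidef_iff_dotProduct_mulVec.mpr ⟨?_, ?_⟩
  · show _ᴴ = _
    rw [Matrix.conjTranspose_smul, hN.1]
    congr 1
    exact Complex.conj_ofReal c
  · intro x
    rw [Matrix.smul_mulVec, dotProduct_smul, smul_eq_mul]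
    exact mul_nonneg (by rw [Complex.zero_le_real]; exact hc) (hN.dotProduct_mulVec_nonneg x)

lemma amhm {X Y P Q Z : Matrix (Fin n) (Fin n) ℂ}
    (hX : X.IsHermitian) (hY : Y.IsHermitian) (hZ : Z.IsHermitian)
    (hP : P.PosSemidef) (hQ : Q.PosSemidef)
    (hXP : X * P = 1) (hPX : P * X = 1) (hYQ : Y * Q = 1) (hQY : Q * Y = 1)
    (hSZ : (X + Y) * Z = 1) (hZS : Z * (X + Y) = 1) :
    (P + Q - (4 : ℂ) • Z).PosSemidef := by
  have pX : ∀ C : Matrix (Fin n) (Fin n) ℂ, C * P * X = C := fun C => by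
    rw [Matrix.mul_assoc, hPX, Matrix.mul_one]
  have qY : ∀ C : Matrix (Fin n) (Fin n) ℂ, C * Q * Y = C := fun C => by
    rw [Matrix.mul_assoc, hQY, Matrix.mul_one]
  set W := P + Q - (4 : ℂ) • Z with hW
  set G := (Y - X) * P * (Y - X) + (X - Y) * Q * (X - Y) with hG
  have h4 : (4 : ℂ) • Z = Z + Z + Z + Z := by module
  have e1 : (X + Y) * P * (X + Y) = X + Y + Y + Y * P * Y := by
    have : (X + Y) * P * (X + Y) = X*P*X + X*P*Y + Y*P*X + Y*P*Y := by noncomm_ring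
    rw [this, hXP, pX Y, Matrix.one_mul, Matrix.one_mul]
  have e2 : (X + Y) * Q * (X + Y) = Y + X + X + X * Q * X := by
    have : (X + Y) * Q * (X + Y) = Y*Q*Y + Y*Q*X + X*Q*Y + X*Q*X := by noncomm_ring
    rw [this, hYQ, qY X, Matrix.one_mul, Matrix.one_mul]
  have e3 : (X + Y) * Z * (X + Y) = X + Y := by rw [hSZ, Matrix.one_mul]
  have key : (X + Y) * W * (X + Y) = G := by
    have hGexp : G = Y*P*Y + X*Q*X - X - Y := by
      have : G = Y*P*Y - Y*P*X - X*P*Y + X*P*X + (X*Q*X - X*Q*Y - Y*Q*X + Y*Q*Y) := by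
        rw [hG]; noncomm_ring
      rw [this, hXP, hYQ, pX Y, qY X, Matrix.one_mul, Matrix.one_mul]
      abel
    have hL : (X + Y) * W * (X + Y)
        = (X+Y)*P*(X+Y) + (X+Y)*Q*(X+Y) - ((X+Y)*Z*(X+Y) + (X+Y)*Z*(X+Y) + (X+Y)*Z*(X+Y) + (X+Y)*Z*(X+Y)) := by
      rw [hW, h4]; noncomm_ring
    rw [hL, e1, e2, e3, hGexp]
    abel
  have hWZ : W = Z * G * Z := by
    rw [← key]
    have : Z * ((X + Y) * W * (X + Y)) * Z = (Z * (X + Y)) * W * ((X + Y) * Z) := by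
      noncomm_ring
    rw [this, hZS, hSZ, Matrix.one_mul, Matrix.mul_one]
  have hGpsd : G.PosSemidef := by
    apply Matrix.PosSemidef.add
    · have h' : (Y - X)ᴴ = Y - X := hY.sub hX
      have := hP.conjTranspose_mul_mul_same (Y - X)
      rwa [h'] at this
    · have h' : (X - Y)ᴴ = X - Y := hX.sub hY
      have := hQ.conjTranspose_mul_mul_same (X - Y)
      rwa [h'] at this
  have hZh : Zᴴ = Z := hZ
  have := hGpsd.conjTranspose_mul_mul_same Z
  rwa [hZh, ← hWZ] at this

section resolvent

variable {P : Matrix (Fin n) (Fin n) ℂ} (hP : P.PosSemidef) {t : ℝ}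

lemma cfc_const (c : ℝ) : hP.1.cfc (fun _ => c) = (c : ℂ) • 1 := by
  have h1 : (fun _ : ℝ => c) = fun x : ℝ => c * (fun _ : ℝ => (1:ℝ)) x := by
    funext x; simp
  rw [h1, cfc_smul' hP.1, cfc_one' hP.1]

lemma cfc_shift : hP.1.cfc (fun l => l + t) = P + (t : ℂ) • 1 := by
  have h1 : (fun l : ℝ => l + t) = fun l : ℝ => (fun x : ℝ => x) l + (fun _ : ℝ => t) l := rfl
  rw [h1, cfc_add' hP.1, cfc_id' hP.1, cfc_const hP]

lemma eig_add_t_ne (ht : 0 < t) (k : Fin n) : hP.1.eigenvalues k + t ≠ 0 := by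
  have := hP.eigenvalues_nonneg k
  intro h
  linarith

lemma resolvent_mul (ht : 0 < t) : (P + (t : ℂ) • 1) * hP.1.cfc (fun l => (l + t)⁻¹) = 1 := by
  rw [← cfc_shift hP, ← cfc_mul' hP.1]
  rw [cfc_congr' hP.1 (g := fun _ => 1) (fun k => mul_inv_cancel₀ (eig_add_t_ne hP ht k))]
  exact cfc_one' hP.1

lemma mul_resolvent (ht : 0 < t) : hP.1.cfc (fun l => (l + t)⁻¹) * (P + (t : ℂ) • 1) = 1 := by
  rw [← cfc_shift hP, ← cfc_mul' hP.1]
  rw [cfc_congr' hP.1 (g := fun _ => 1) (fun k => inv_mul_cancel₀ (eig_add_t_ne hP ht k))]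
  exact cfc_one' hP.1

lemma resolvent_psd (ht : 0 < t) : (hP.1.cfc (fun l => (l + t)⁻¹)).PosSemidef := by
  apply cfc_psd
  intro k
  have h1 := hP.eigenvalues_nonneg k
  have h2 : 0 < hP.1.eigenvalues k + t := by linarith
  exact (inv_pos.mpr h2).le

lemma cfc_g_eq (ht : 0 < t) : hP.1.cfc (fun l => l * l / (l + t))
    = P - (t : ℂ) • 1 + ((t^2 : ℝ) : ℂ) • hP.1.cfc (fun l => (l + t)⁻¹) := by
  have h1 : hP.1.cfc (fun l => l * l / (l + t))
      = hP.1.cfc (fun l => ((fun x => x) l + (fun _ => -t) l) + (fun x => t^2 * (x + t)⁻¹) l) := by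
    apply cfc_congr'
    intro k
    have hne := eig_add_t_ne hP ht k
    field_simp
    ring
  rw [h1, cfc_add' hP.1, cfc_add' hP.1, cfc_id' hP.1, cfc_const hP, cfc_smul' hP.1]
  push_cast
  rw [neg_smul, sub_eq_add_neg]

lemma cfc_h_eq (ht : 0 < t) : hP.1.cfc (fun l => l / (l + t))
    = 1 - (t : ℂ) • hP.1.cfc (fun l => (l + t)⁻¹) := by
  have h1 : hP.1.cfc (fun l => l / (l + t))
      = hP.1.cfc (fun l => (fun _ => (1:ℝ)) l + (fun x => -t * (x + t)⁻¹) l) := by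
    apply cfc_congr'
    intro k
    have hne := eig_add_t_ne hP ht k
    field_simp
    ring
  rw [h1, cfc_add' hP.1, cfc_one' hP.1, cfc_smul' hP.1]
  push_cast
  rw [neg_smul, ← sub_eq_add_neg]

end resolvent

lemma smul_one_herm (t : ℝ) : (((t:ℂ) • (1 : Matrix (Fin n) (Fin n) ℂ))).IsHermitian := by
  show _ᴴ = _
  rw [Matrix.conjTranspose_smul, Matrix.conjTranspose_one]
  congr 1
  exact Complex.conj_ofReal t

lemma per_t {A B : Matrix (Fin n) (Fin n) ℂ} (hA : A.PosSemidef) (hB : B.PosSemidef)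
    (hM : ((2 : ℂ)⁻¹ • (A + B)).PosSemidef) {t : ℝ} (ht : 0 < t) :
    (hA.1.cfc (fun l => l * l / (l + t)) + hB.1.cfc (fun l => l * l / (l + t))
      - hM.sqrt * (hA.1.cfc (fun l => l / (l + t)) + hB.1.cfc (fun l => l / (l + t))) * hM.sqrt).PosSemidef := by
  set M := (2 : ℂ)⁻¹ • (A + B) with hMdef
  set C := hM.sqrt with hCdef
  set QA := hA.1.cfc (fun l => (l + t)⁻¹) with hQAdef
  set QB := hB.1.cfc (fun l => (l + t)⁻¹) with hQBdef
  set QM := hM.1.cfc (fun l => (l + t)⁻¹) with hQMdef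
  have hAB2M : A = (2 : ℂ) • M - B := by
    rw [hMdef, smul_smul]
    norm_num
  have hCC : C * C = M := hM.sqrt_mul_self_s2
  have hCherm : Cᴴ = C := hM.posSemidef_sqrt.1
  have hXP : (A + (t:ℂ) • 1) * QA = 1 := resolvent_mul hA ht
  have hPX : QA * (A + (t:ℂ) • 1) = 1 := mul_resolvent hA ht
  have hYQ : (B + (t:ℂ) • 1) * QB = 1 := resolvent_mul hB ht
  have hQY : QB * (B + (t:ℂ) • 1) = 1 := mul_resolvent hB ht
  have hMQ : (M + (t:ℂ) • 1) * QM = 1 := resolvent_mul hM ht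
  have hQM' : QM * (M + (t:ℂ) • 1) = 1 := mul_resolvent hM ht
  have hSum : (A + (t:ℂ) • 1) + (B + (t:ℂ) • 1) = (2:ℂ) • (M + (t:ℂ) • 1) := by
    rw [hAB2M]; module
  have hSZ : ((A + (t:ℂ) • 1) + (B + (t:ℂ) • 1)) * ((2:ℂ)⁻¹ • QM) = 1 := by
    rw [hSum, smul_mul_assoc, mul_smul_comm, smul_smul, show (2:ℂ) * 2⁻¹ = 1 by norm_num,
      one_smul, hMQ]
  have hZS : ((2:ℂ)⁻¹ • QM) * ((A + (t:ℂ) • 1) + (B + (t:ℂ) • 1)) = 1 := by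
    rw [hSum, smul_mul_assoc, mul_smul_comm, smul_smul, show (2:ℂ)⁻¹ * 2 = 1 by norm_num,
      one_smul, hQM']
  have hZherm : ((2:ℂ)⁻¹ • QM).IsHermitian := by
    show _ᴴ = _
    rw [Matrix.conjTranspose_smul, (cfc_herm hM.1 _ : QMᴴ = QM)]
    congr 1
    simp
  have hRpsd : (QA + QB - (2 : ℂ) • QM).PosSemidef := by
    have h4 : (4 : ℂ) • ((2:ℂ)⁻¹ • QM) = (2:ℂ) • QM := by
      rw [smul_smul]; norm_num
    have := amhm (hA.1.add (smul_one_herm t)) (hB.1.add (smul_one_herm t)) hZherm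
      (resolvent_psd hA ht) (resolvent_psd hB ht) hXP hPX hYQ hQY hSZ hZS
    rwa [h4] at this
  set R := QA + QB - (2 : ℂ) • QM with hRdef
  -- commutation facts
  have hCM : C * M = M * C := by
    rw [← hCC, Matrix.mul_assoc]
  have hCMt : C * (M + (t:ℂ) • 1) = (M + (t:ℂ) • 1) * C := by
    simp only [Matrix.mul_add, Matrix.add_mul, hCM, mul_smul_comm, smul_mul_assoc,
      Matrix.mul_one, Matrix.one_mul]
  have hCQM : C * QM = QM * C := by
    calc C * QM = (QM * (M + (t:ℂ) • 1)) * (C * QM) := by rw [hQM', Matrix.one_mul]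
      _ = QM * (((M + (t:ℂ) • 1) * C) * QM) := by simp only [Matrix.mul_assoc]
      _ = QM * ((C * (M + (t:ℂ) • 1)) * QM) := by rw [← hCMt]
      _ = QM * (C * ((M + (t:ℂ) • 1) * QM)) := by simp only [Matrix.mul_assoc]
      _ = QM * C := by rw [hMQ, Matrix.mul_one]
  have hCQMC : C * QM * C = QM * M := by
    rw [hCQM, Matrix.mul_assoc, hCC]
  have hQMM : QM * M = 1 - (t:ℂ) • QM := by
    have h1 : QM * M + (t:ℂ) • QM = 1 := by
      rw [← hQM']
      simp only [Matrix.mul_add, mul_smul_comm, Matrix.mul_one]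
    rw [← h1]; abel
  -- the key identity
  have key : hA.1.cfc (fun l => l * l / (l + t)) + hB.1.cfc (fun l => l * l / (l + t))
      - C * (hA.1.cfc (fun l => l / (l + t)) + hB.1.cfc (fun l => l / (l + t))) * C
      = (t:ℂ) • ((t:ℂ) • R + C * R * C) := by
    rw [cfc_g_eq hA ht, cfc_g_eq hB ht, cfc_h_eq hA ht, cfc_h_eq hB ht,
      ← hQAdef, ← hQBdef, hRdef]
    simp only [Matrix.mul_add, Matrix.add_mul, Matrix.mul_sub, Matrix.sub_mul,
      Matrix.mul_one, Matrix.one_mul, mul_smul_comm, smul_mul_assoc]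
    rw [hCC, hCQMC, hQMM, hAB2M]
    push_cast
    module
  rw [key]
  apply psd_smul_real _ ht.le
  apply Matrix.PosSemidef.add
  · exact psd_smul_real hRpsd ht.le
  · have := hRpsd.conjTranspose_mul_mul_same C
    rwa [hCherm] at this


-- ### part 5 : scalar phi2 lemmas, master lemma, final assembly

lemma phi_integral' (hr0 : 0 < r) (hr1 : r < 1) {l : ℝ} (hl : 0 ≤ l) :
    ∫ t in Ioi (0:ℝ), phi r l t = l ^ r * Kr r := by
  rcases hl.eq_or_lt with h|h
  · rw [← h]
    simp [phi, Real.zero_rpow (ne_of_gt hr0)]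
  · exact phi_integral hr0 hr1 h

lemma phi2_eq (r l : ℝ) : (fun t : ℝ => t ^ (r-1) * (l * l / (l + t))) = fun t => l * phi r l t := by
  funext t
  rw [phi, mul_div_assoc]
  ring

lemma phi2_integrableOn (hr0 : 0 < r) (hr1 : r < 1) {l : ℝ} (hl : 0 ≤ l) :
    IntegrableOn (fun t : ℝ => t ^ (r-1) * (l * l / (l + t))) (Ioi 0) := by
  rw [phi2_eq]
  exact (phi_integrableOn hr0 hr1 hl).const_mul l

lemma phi2_integral (hr0 : 0 < r) (hr1 : r < 1) {l : ℝ} (hl : 0 ≤ l) :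
    ∫ t in Ioi (0:ℝ), t ^ (r-1) * (l * l / (l + t)) = l ^ (r+1) * Kr r := by
  rw [phi2_eq, MeasureTheory.integral_const_mul, phi_integral' hr0 hr1 hl]
  rcases hl.eq_or_lt with h|h
  · rw [← h]
    simp [Real.zero_rpow (by positivity : r + 1 ≠ 0), Real.zero_rpow (ne_of_gt hr0)]
  · rw [← mul_assoc, Real.rpow_add h, Real.rpow_one]
    ring

lemma quad_weight {A : Matrix (Fin n) (Fin n) ℂ} (hA : A.IsHermitian) (c : ℝ) (f : ℝ → ℝ)
    (x : Fin n → ℂ) :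
    star x ⬝ᵥ (hA.cfc (fun l => c * f l) *ᵥ x) = (c : ℂ) * (star x ⬝ᵥ (hA.cfc f *ᵥ x)) := by
  rw [cfc_smul' hA, Matrix.smul_mulVec, dotProduct_smul, smul_eq_mul]

lemma quad_conj {C N : Matrix (Fin n) (Fin n) ℂ} (hC : Cᴴ = C) (x : Fin n → ℂ) :
    star x ⬝ᵥ ((C * N * C) *ᵥ x) = star (C *ᵥ x) ⬝ᵥ (N *ᵥ (C *ᵥ x)) := by
  rw [← Matrix.mulVec_mulVec, ← Matrix.mulVec_mulVec, Matrix.dotProduct_mulVec _ C]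
  rw [show star x ᵥ* C = star (C *ᵥ x) by rw [Matrix.star_mulVec, hC]]

lemma master_gen {A : Matrix (Fin n) (Fin n) ℂ} (hA : A.PosSemidef) (x : Fin n → ℂ)
    (F : ℝ → ℝ → ℝ) (p c : ℝ)
    (hInt : ∀ l : ℝ, 0 ≤ l → IntegrableOn (fun t => F t l) (Ioi 0))
    (hVal : ∀ l : ℝ, 0 ≤ l → ∫ t in Ioi (0:ℝ), F t l = l ^ p * c) :
    IntegrableOn (fun t => star x ⬝ᵥ (hA.1.cfc (F t) *ᵥ x)) (Ioi 0) ∧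
      ∫ t in Ioi (0:ℝ), star x ⬝ᵥ (hA.1.cfc (F t) *ᵥ x)
        = (c : ℂ) * (star x ⬝ᵥ (hA.1.cfc (fun l => l ^ p) *ᵥ x)) := by
  set y := star (hA.1.eigenvectorUnitary : Matrix (Fin n) (Fin n) ℂ) *ᵥ x with hy
  have hfun : (fun t => star x ⬝ᵥ (hA.1.cfc (F t) *ᵥ x))
      = fun t => ∑ k, ((F t (hA.1.eigenvalues k) : ℝ) : ℂ) * (star (y k) * y k) :=
    funext fun t => cfc_quadform hA.1 (F t) x
  have hIntk : ∀ k, IntegrableOn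
      (fun t => ((F t (hA.1.eigenvalues k) : ℝ) : ℂ) * (star (y k) * y k)) (Ioi 0) :=
    fun k => ((hInt _ (hA.eigenvalues_nonneg k)).ofReal).mul_const _
  constructor
  · rw [hfun]
    exact integrable_finset_sum _ (fun k _ => hIntk k)
  · rw [hfun, integral_finset_sum _ (fun k _ => hIntk k)]
    have hk : ∀ k : Fin n, ∫ t in Ioi (0:ℝ),
        ((F t (hA.1.eigenvalues k) : ℝ) : ℂ) * (star (y k) * y k)
        = (((hA.1.eigenvalues k ^ p * c : ℝ) : ℂ)) * (star (y k) * y k) := by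
      intro k
      have hsm : (fun t : ℝ => ((F t (hA.1.eigenvalues k) : ℝ) : ℂ) * (star (y k) * y k))
          = fun t : ℝ => (F t (hA.1.eigenvalues k)) • (star (y k) * y k) := by
        funext t
        rw [Complex.real_smul]
      rw [hsm, integral_smul_const, hVal _ (hA.eigenvalues_nonneg k), Complex.real_smul]
    simp only [hk]
    rw [cfc_quadform hA.1 (fun l => l ^ p) x, Finset.mul_sum]
    congr 1
    funext k
    push_cast
    ring

lemma integral_nonneg_cpx {F : ℝ → ℂ} (hi : IntegrableOn F (Ioi 0))
    (h : ∀ t ∈ Ioi (0:ℝ), 0 ≤ F t) : 0 ≤ ∫ t in Ioi (0:ℝ), F t := by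
  have h' : ∀ t ∈ Ioi (0:ℝ), 0 ≤ (F t).re ∧ (F t).im = 0 := by
    intro t ht
    have := h t ht
    rw [Complex.le_def] at this
    exact ⟨by simpa using this.1, by simpa using this.2.symm⟩
  rw [Complex.le_def]
  constructor
  · simp only [Complex.zero_re]
    rw [show (∫ t in Ioi (0:ℝ), F t).re = ∫ t in Ioi (0:ℝ), (F t).re from
      (integral_re hi).symm]
    exact setIntegral_nonneg measurableSet_Ioi (fun t ht => (h' t ht).1)
  · simp only [Complex.zero_im]
    rw [show (∫ t in Ioi (0:ℝ), F t).im = ∫ t in Ioi (0:ℝ), (F t).im from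
      (integral_im hi).symm]
    rw [setIntegral_congr_fun measurableSet_Ioi (fun t ht => (h' t ht).2)]
    simp

lemma conj_herm {C N : Matrix (Fin n) (Fin n) ℂ} (hC : Cᴴ = C) (hN : Nᴴ = N) :
    (C * N * C)ᴴ = C * N * C := by
  rw [Matrix.conjTranspose_mul, Matrix.conjTranspose_mul, hC, hN, Matrix.mul_assoc]

end RpowIneq

open RpowIneq

set_option maxHeartbeats 1600000 in
theorem rpow_add_one_ge_sqrt_mean_conj {n : ℕ} {A B : Matrix (Fin n) (Fin n) ℂ}
    (hA : A.PosSemidef) (hB : B.PosSemidef) (r : ℝ) (hr0 : 0 ≤ r) (hr1 : r ≤ 1)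
    (hM : ((2 : ℂ)⁻¹ • (A + B)).PosSemidef) :
    (hA.1.rpow (r + 1) + hB.1.rpow (r + 1)
      - hM.sqrt * (hA.1.rpow r + hB.1.rpow r) * hM.sqrt).PosSemidef := by
  have hCC : hM.sqrt * hM.sqrt = (2:ℂ)⁻¹ • (A + B) := hM.sqrt_mul_self_s2
  have hCherm : hM.sqrtᴴ = hM.sqrt := hM.posSemidef_sqrt.1
  rcases eq_or_lt_of_le hr0 with h0|h0
  · -- r = 0
    have e1 : hA.1.rpow (r + 1) = A := by
      show hA.1.cfc _ = A
      rw [cfc_congr' hA.1 (g := fun x => x)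
        (fun k => by rw [← h0, zero_add, Real.rpow_one]), cfc_id' hA.1]
    have e2 : hB.1.rpow (r + 1) = B := by
      show hB.1.cfc _ = B
      rw [cfc_congr' hB.1 (g := fun x => x)
        (fun k => by rw [← h0, zero_add, Real.rpow_one]), cfc_id' hB.1]
    have e3 : hA.1.rpow r = 1 := by
      show hA.1.cfc _ = 1
      rw [cfc_congr' hA.1 (g := fun _ => 1)
        (fun k => by rw [← h0]; exact Real.rpow_zero _), cfc_one' hA.1]
    have e4 : hB.1.rpow r = 1 := by
      show hB.1.cfc _ = 1
      rw [cfc_congr' hB.1 (g := fun _ => 1)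
        (fun k => by rw [← h0]; exact Real.rpow_zero _), cfc_one' hB.1]
    rw [e1, e2, e3, e4]
    have hz : A + B - hM.sqrt * ((1 : Matrix (Fin n) (Fin n) ℂ) + 1) * hM.sqrt = 0 := by
      rw [Matrix.mul_add, Matrix.mul_one, Matrix.add_mul, hCC]
      module
    rw [hz]
    exact Matrix.PosSemidef.zero
  rcases eq_or_lt_of_le hr1 with h1|h1
  · -- r = 1
    subst h1
    have e1 : hA.1.rpow (1 + 1) = A * A := by
      show hA.1.cfc _ = A * A
      rw [cfc_congr' hA.1 (g := fun x => x * x)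
        (fun k => by rw [show ((1:ℝ)+1) = ((2:ℕ):ℝ) by norm_num, Real.rpow_natCast]; ring),
        show (fun x : ℝ => x * x) = (fun x : ℝ => (fun y : ℝ => y) x * (fun y : ℝ => y) x) from rfl,
        cfc_mul' hA.1, cfc_id' hA.1]
    have e2 : hB.1.rpow (1 + 1) = B * B := by
      show hB.1.cfc _ = B * B
      rw [cfc_congr' hB.1 (g := fun x => x * x)
        (fun k => by rw [show ((1:ℝ)+1) = ((2:ℕ):ℝ) by norm_num, Real.rpow_natCast]; ring),
        show (fun x : ℝ => x * x) = (fun x : ℝ => (fun y : ℝ => y) x * (fun y : ℝ => y) x) from rfl,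
        cfc_mul' hB.1, cfc_id' hB.1]
    have e3 : hA.1.rpow 1 = A := by
      show hA.1.cfc _ = A
      rw [cfc_congr' hA.1 (g := fun x => x) (fun k => Real.rpow_one _), cfc_id' hA.1]
    have e4 : hB.1.rpow 1 = B := by
      show hB.1.cfc _ = B
      rw [cfc_congr' hB.1 (g := fun x => x) (fun k => Real.rpow_one _), cfc_id' hB.1]
    rw [e1, e2, e3, e4]
    have hconj : hM.sqrt * (A + B) * hM.sqrt = (2:ℂ)⁻¹ • ((A+B)*(A+B)) := by
      have h2 : A + B = (2:ℂ) • ((2:ℂ)⁻¹ • (A+B)) := by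
        rw [smul_smul]
        norm_num
      calc hM.sqrt * (A+B) * hM.sqrt
          = hM.sqrt * ((2:ℂ) • ((2:ℂ)⁻¹ • (A+B))) * hM.sqrt := by rw [← h2]
        _ = (2:ℂ) • (hM.sqrt * ((2:ℂ)⁻¹ • (A+B)) * hM.sqrt) := by
            rw [mul_smul_comm, smul_mul_assoc]
        _ = (2:ℂ) • (hM.sqrt * (hM.sqrt * hM.sqrt) * hM.sqrt) := by rw [hCC]
        _ = (2:ℂ) • ((hM.sqrt * hM.sqrt) * (hM.sqrt * hM.sqrt)) := by
            rw [(fun z : Matrix (Fin n) (Fin n) ℂ => by noncomm_ring :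
              ∀ z : Matrix (Fin n) (Fin n) ℂ, z * (z * z) * z = (z * z) * (z * z)) hM.sqrt]
        _ = (2:ℂ) • (((2:ℂ)⁻¹ • (A+B)) * ((2:ℂ)⁻¹ • (A+B))) := by rw [hCC]
        _ = (2:ℂ)⁻¹ • ((A+B)*(A+B)) := by
            rw [smul_mul_assoc, mul_smul_comm, smul_smul, smul_smul]
            norm_num
    have hfact : A * A + B * B - hM.sqrt * (A + B) * hM.sqrt
        = (2:ℂ)⁻¹ • ((A - B) * (A - B)) := by
      rw [hconj]
      simp only [Matrix.mul_add, Matrix.add_mul, Matrix.mul_sub, Matrix.sub_mul]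
      module
    rw [hfact, show ((2:ℂ)⁻¹) = (((2:ℝ)⁻¹ : ℝ) : ℂ) by norm_num]
    apply psd_smul_real _ (by norm_num)
    have := Matrix.posSemidef_conjTranspose_mul_self (A - B)
    rwa [show (A - B)ᴴ = A - B from hA.1.sub hB.1] at this
  -- main case : 0 < r < 1
  refine Matrix.posSemidef_iff_dotProduct_mulVec.mpr ⟨?_, ?_⟩
  · apply Matrix.IsHermitian.sub
    · exact (cfc_herm hA.1 _).add (cfc_herm hB.1 _)
    · exact conj_herm hCherm ((cfc_herm hA.1 _).add (cfc_herm hB.1 _))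
  intro x
  show 0 ≤ star x ⬝ᵥ ((hA.1.cfc (fun l => l ^ (r+1)) + hB.1.cfc (fun l => l ^ (r+1))
      - hM.sqrt * (hA.1.cfc (fun l => l ^ r) + hB.1.cfc (fun l => l ^ r)) * hM.sqrt) *ᵥ x)
  set y := hM.sqrt *ᵥ x with hydef
  have m1 := master_gen hA x (fun t l => t ^ (r-1) * (l * l / (l + t))) (r+1) (Kr r)
    (fun l hl => phi2_integrableOn h0 h1 hl) (fun l hl => phi2_integral h0 h1 hl)
  have m2 := master_gen hB x (fun t l => t ^ (r-1) * (l * l / (l + t))) (r+1) (Kr r)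
    (fun l hl => phi2_integrableOn h0 h1 hl) (fun l hl => phi2_integral h0 h1 hl)
  have m3 := master_gen hA y (fun t l => t ^ (r-1) * (l / (l + t))) r (Kr r)
    (fun l hl => phi_integrableOn h0 h1 hl) (fun l hl => phi_integral' h0 h1 hl)
  have m4 := master_gen hB y (fun t l => t ^ (r-1) * (l / (l + t))) r (Kr r)
    (fun l hl => phi_integrableOn h0 h1 hl) (fun l hl => phi_integral' h0 h1 hl)
  set G : ℝ → ℂ := fun t =>
    star x ⬝ᵥ (hA.1.cfc (fun l => t ^ (r-1) * (l * l / (l + t))) *ᵥ x)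
    + star x ⬝ᵥ (hB.1.cfc (fun l => t ^ (r-1) * (l * l / (l + t))) *ᵥ x)
    - star y ⬝ᵥ (hA.1.cfc (fun l => t ^ (r-1) * (l / (l + t))) *ᵥ y)
    - star y ⬝ᵥ (hB.1.cfc (fun l => t ^ (r-1) * (l / (l + t))) *ᵥ y) with hGdef
  have i12 : IntegrableOn (fun t =>
      star x ⬝ᵥ (hA.1.cfc (fun l => t ^ (r-1) * (l * l / (l + t))) *ᵥ x)
      + star x ⬝ᵥ (hB.1.cfc (fun l => t ^ (r-1) * (l * l / (l + t))) *ᵥ x)) (Ioi 0) :=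
    m1.1.add m2.1
  have i123 : IntegrableOn (fun t =>
      star x ⬝ᵥ (hA.1.cfc (fun l => t ^ (r-1) * (l * l / (l + t))) *ᵥ x)
      + star x ⬝ᵥ (hB.1.cfc (fun l => t ^ (r-1) * (l * l / (l + t))) *ᵥ x)
      - star y ⬝ᵥ (hA.1.cfc (fun l => t ^ (r-1) * (l / (l + t))) *ᵥ y)) (Ioi 0) :=
    i12.sub m3.1
  have hGint : IntegrableOn G (Ioi 0) := i123.sub m4.1
  have hGnonneg : ∀ t ∈ Ioi (0:ℝ), 0 ≤ G t := by
    intro t ht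
    have ht' : (0:ℝ) < t := ht
    have hpt := (per_t hA hB hM ht').dotProduct_mulVec_nonneg x
    have expand : star x ⬝ᵥ ((hA.1.cfc (fun l => l * l / (l + t))
        + hB.1.cfc (fun l => l * l / (l + t))
        - hM.sqrt * (hA.1.cfc (fun l => l / (l + t)) + hB.1.cfc (fun l => l / (l + t))) * hM.sqrt) *ᵥ x)
        = star x ⬝ᵥ (hA.1.cfc (fun l => l * l / (l + t)) *ᵥ x)
          + star x ⬝ᵥ (hB.1.cfc (fun l => l * l / (l + t)) *ᵥ x)
          - star y ⬝ᵥ (hA.1.cfc (fun l => l / (l + t)) *ᵥ y)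
          - star y ⬝ᵥ (hB.1.cfc (fun l => l / (l + t)) *ᵥ y) := by
      rw [Matrix.sub_mulVec, Matrix.add_mulVec, dotProduct_sub, dotProduct_add,
        quad_conj hCherm, ← hydef, Matrix.add_mulVec, dotProduct_add]
      ring
    have hGt : G t = ((t ^ (r-1) : ℝ) : ℂ)
        * (star x ⬝ᵥ ((hA.1.cfc (fun l => l * l / (l + t))
        + hB.1.cfc (fun l => l * l / (l + t))
        - hM.sqrt * (hA.1.cfc (fun l => l / (l + t)) + hB.1.cfc (fun l => l / (l + t))) * hM.sqrt) *ᵥ x)) := by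
      simp only [hGdef]
      simp only [quad_weight]
      rw [expand]
      ring
    rw [hGt]
    apply mul_nonneg
    · rw [Complex.zero_le_real]
      exact Real.rpow_nonneg ht'.le _
    · exact hpt
  have hInt0 : 0 ≤ ∫ t in Ioi (0:ℝ), G t := integral_nonneg_cpx hGint hGnonneg
  have hIntval : ∫ t in Ioi (0:ℝ), G t
      = (Kr r : ℂ) * (star x ⬝ᵥ ((hA.1.cfc (fun l => l ^ (r+1)) + hB.1.cfc (fun l => l ^ (r+1))
          - hM.sqrt * (hA.1.cfc (fun l => l ^ r) + hB.1.cfc (fun l => l ^ r)) * hM.sqrt) *ᵥ x)) := by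
    have expand2 : star x ⬝ᵥ ((hA.1.cfc (fun l => l ^ (r+1)) + hB.1.cfc (fun l => l ^ (r+1))
        - hM.sqrt * (hA.1.cfc (fun l => l ^ r) + hB.1.cfc (fun l => l ^ r)) * hM.sqrt) *ᵥ x)
        = star x ⬝ᵥ (hA.1.cfc (fun l => l ^ (r+1)) *ᵥ x)
          + star x ⬝ᵥ (hB.1.cfc (fun l => l ^ (r+1)) *ᵥ x)
          - star y ⬝ᵥ (hA.1.cfc (fun l => l ^ r) *ᵥ y)
          - star y ⬝ᵥ (hB.1.cfc (fun l => l ^ r) *ᵥ y) := by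
      rw [Matrix.sub_mulVec, Matrix.add_mulVec, dotProduct_sub, dotProduct_add,
        quad_conj hCherm, ← hydef, Matrix.add_mulVec, dotProduct_add]
      ring
    rw [expand2]
    simp only [hGdef]
    rw [MeasureTheory.integral_sub i123 m4.1,
      MeasureTheory.integral_sub i12 m3.1,
      MeasureTheory.integral_add m1.1 m2.1, m1.2, m2.2, m3.2, m4.2]
    ring
  rw [hIntval] at hInt0
  have hKpos := Kr_pos h0 h1
  have hstep : star x ⬝ᵥ ((hA.1.cfc (fun l => l ^ (r+1)) + hB.1.cfc (fun l => l ^ (r+1))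
      - hM.sqrt * (hA.1.cfc (fun l => l ^ r) + hB.1.cfc (fun l => l ^ r)) * hM.sqrt) *ᵥ x)
      = (((Kr r)⁻¹ : ℝ) : ℂ) * ((Kr r : ℂ)
        * (star x ⬝ᵥ ((hA.1.cfc (fun l => l ^ (r+1)) + hB.1.cfc (fun l => l ^ (r+1))
      - hM.sqrt * (hA.1.cfc (fun l => l ^ r) + hB.1.cfc (fun l => l ^ r)) * hM.sqrt) *ᵥ x))) := by
    rw [← mul_assoc, ← Complex.ofReal_mul, inv_mul_cancel₀ (ne_of_gt hKpos)]
    simp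
  rw [hstep]
  apply mul_nonneg _ hInt0
  rw [Complex.zero_le_real]
  positivity
end

section
/- Let Z = [[M, K],[K*, N]] be a positive semidefinite 2×2 block matrix with M of size m×m and N of size n×n. Then for every j ≤ min(m,n), the j-th largest singular value of the off-diagonal block K satisfies σ_j(K) ≤ (1/2) λ_j(Z), where λ_j(Z) is the j-th largest eigenvalue of Z. -/
open scoped ComplexOrder Matrix

open scoped InnerProductSpace
open Polynomial Matrix

section Aux

lemma sort_getD_perm {d : ℕ} (f : Fin d → ℝ) :
    ∃ π : Equiv.Perm (Fin d), Antitone (f ∘ π) ∧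
      ∀ (j : ℕ) (hj : j < d),
        ((Finset.univ.val.map f).sort (· ≥ ·)).getD j 0 = f (π ⟨j, hj⟩) := by
  classical
  set π := Tuple.sort (fun i => -f i) with hπ
  have hmono : Monotone ((fun i => -f i) ∘ π) := Tuple.monotone_sort _
  have hanti : Antitone (f ∘ π) := by
    intro a b hab
    have := hmono hab
    simpa using this
  refine ⟨π, hanti, ?_⟩
  have hperm : (Finset.univ.val.map f) = ↑(List.ofFn (f ∘ π)) := by
    have h1 : (Finset.univ.map π.toEmbedding : Finset (Fin d)) = Finset.univ := by
      simp
    have h2 : (Finset.univ.val.map π) = Finset.univ.val := by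
      have := congrArg Finset.val h1
      simpa [Finset.map_val] using this
    calc Finset.univ.val.map f = (Finset.univ.val.map π).map f := by rw [h2]
      _ = Finset.univ.val.map (f ∘ π) := by rw [Multiset.map_map]
      _ = ↑(List.ofFn (f ∘ π)) := by
          rw [List.ofFn_eq_map]
          rfl
  have hsortedL : ((Finset.univ.val.map f).sort (· ≥ ·)).Pairwise (· ≥ ·) :=
    Multiset.pairwise_sort _ _
  have hsortedR : (List.ofFn (f ∘ π)).Pairwise (· ≥ ·) := by
    rw [List.pairwise_ofFn]
    intro a b hab
    exact hanti hab.le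
  have hpermL : ((Finset.univ.val.map f).sort (· ≥ ·)).Perm (List.ofFn (f ∘ π)) := by
    rw [← Multiset.coe_eq_coe, Multiset.sort_eq, hperm]
  have hkey : ((Finset.univ.val.map f).sort (· ≥ ·)) = List.ofFn (f ∘ π) :=
    List.Perm.eq_of_pairwise' hsortedL hsortedR hpermL
  intro j hj
  rw [hkey, List.getD_eq_getElem _ _ (by simpa using hj), List.getElem_ofFn]
  simp

lemma charpoly_roots_hermitian {ι : Type*} [Fintype ι] [DecidableEq ι]
    {A : Matrix ι ι ℂ} (hA : A.IsHermitian) :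
    A.charpoly.roots = (Finset.univ.val.map hA.eigenvalues).map (fun x : ℝ => (x : ℂ)) := by
  classical
  set U : Matrix ι ι ℂ := (hA.eigenvectorUnitary : Matrix ι ι ℂ) with hU
  have hUU' : U * star U = 1 := (Matrix.mem_unitaryGroup_iff).mp hA.eigenvectorUnitary.2
  set D : Matrix ι ι ℂ := Matrix.diagonal (RCLike.ofReal ∘ hA.eigenvalues) with hD
  have hspec : A = U * D * star U := hA.spectral_theorem
  set φ : Matrix ι ι ℂ →+* Matrix ι ι ℂ[X] := (C : ℂ →+* ℂ[X]).mapMatrix with hφ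
  have hcp : A.charpoly = D.charpoly := by
    have hcomm : ∀ M : Matrix ι ι ℂ[X], M * Matrix.scalar ι (X : ℂ[X]) =
        Matrix.scalar ι (X : ℂ[X]) * M :=
      fun M => (Matrix.scalar_commute (X : ℂ[X]) (fun a => Commute.all _ _) M).symm
    have hcm : charmatrix A = φ U * charmatrix D * φ (star U) := by
      rw [charmatrix, charmatrix, hspec]
      rw [Matrix.mul_sub, Matrix.sub_mul, map_mul φ, map_mul φ]
      congr 1
      rw [mul_assoc, ← hcomm (φ (star U)), ← mul_assoc, ← map_mul φ, hUU', _root_.map_one φ, one_mul]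
    rw [Matrix.charpoly, Matrix.charpoly, hcm, det_mul, det_mul]
    have h1 : (φ U).det * (φ (star U)).det = 1 := by
      rw [← det_mul, ← map_mul φ, hUU', _root_.map_one φ, det_one]
    calc (φ U).det * (charmatrix D).det * (φ (star U)).det
        = (φ U).det * (φ (star U)).det * (charmatrix D).det := by ring
      _ = (charmatrix D).det := by rw [h1, one_mul]
  have hDcp : D.charpoly = (Finset.univ.val.map
      (fun i => (X : ℂ[X]) - C ((hA.eigenvalues i : ℂ)))).prod := by
    rw [Matrix.charpoly, charmatrix]
    have : Matrix.scalar ι (X : ℂ[X]) - (C : ℂ →+* ℂ[X]).mapMatrix D =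
        Matrix.diagonal (fun i => (X : ℂ[X]) - C ((hA.eigenvalues i : ℂ))) := by
      rw [hD, RingHom.mapMatrix_apply, Matrix.diagonal_map (by simp)]
      rw [Matrix.scalar_apply, ← Matrix.diagonal_sub]
      rfl
    rw [this, det_diagonal]
    rw [Finset.prod_eq_multiset_prod]

  rw [hcp, hDcp]
  have := Polynomial.roots_multiset_prod_X_sub_C
    ((Finset.univ.val.map hA.eigenvalues).map (fun x : ℝ => (x : ℂ)))
  rw [← this]
  congr 1
  rw [Multiset.map_map, Multiset.map_map]
  rfl

lemma eigDesc_hermitian {ι : Type*} [Fintype ι] [DecidableEq ι]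
    {A : Matrix ι ι ℂ} (hA : A.IsHermitian) :
    ∃ σ : Fin (Fintype.card ι) → ι, Function.Bijective σ ∧
      Antitone (hA.eigenvalues ∘ σ) ∧
      ∀ (j : ℕ) (hj : j < Fintype.card ι), eigDesc A j = hA.eigenvalues (σ ⟨j, hj⟩) := by
  classical
  set e := Fintype.equivFin ι with he
  set f : Fin (Fintype.card ι) → ℝ := hA.eigenvalues ∘ e.symm with hf
  obtain ⟨π, hanti, hget⟩ := sort_getD_perm f
  refine ⟨e.symm ∘ π, (e.symm.bijective.comp π.bijective), hanti, ?_⟩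
  intro j hj
  have hroots : A.charpoly.roots.map Complex.re = Finset.univ.val.map hA.eigenvalues := by
    rw [charpoly_roots_hermitian hA, Multiset.map_map]
    simp
  have hmult : Finset.univ.val.map f = Finset.univ.val.map hA.eigenvalues := by
    have h1 : (Finset.univ.map e.symm.toEmbedding : Finset ι) = Finset.univ := by simp
    have h2 : (Finset.univ.val.map e.symm) = (Finset.univ.val : Multiset ι) := by
      have := congrArg Finset.val h1
      simpa [Finset.map_val] using this
    rw [hf, ← Multiset.map_map, h2]
  rw [eigDesc, hroots, ← hmult, hget j hj]
  rfl

lemma toEuclideanLin_eigenvectorBasis {ι : Type*} [Fintype ι] [DecidableEq ι]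
    {A : Matrix ι ι ℂ} (hA : A.IsHermitian) (i : ι) :
    Matrix.toEuclideanLin A (hA.eigenvectorBasis i) =
      (hA.eigenvalues i : ℂ) • hA.eigenvectorBasis i := by
  apply (WithLp.equiv 2 (ι → ℂ)).injective
  rw [Matrix.toEuclideanLin_apply]
  simp only [WithLp.equiv, Equiv.coe_fn_mk, WithLp.ofLp_toLp]
  have := hA.mulVec_eigenvectorBasis i
  ext k
  simpa [Complex.real_smul] using congrFun this k

lemma cf_lower {ι : Type*} [Fintype ι] [DecidableEq ι] {A : Matrix ι ι ℂ}
    (hA : A.IsHermitian) {j : ℕ} (hj : j < Fintype.card ι) {c : ℝ}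
    (w : Fin (j + 1) → EuclideanSpace ℂ ι) (hw : Orthonormal ℂ w)
    (hray : ∀ x : EuclideanSpace ℂ ι, x ∈ Submodule.span ℂ (Set.range w) →
      c * ‖x‖ ^ 2 ≤ (⟪x, Matrix.toEuclideanLin A x⟫_ℂ).re) :
    c ≤ eigDesc A j := by
  classical
  set d := Fintype.card ι with hd
  obtain ⟨σ, hσbij, hσanti, hσeig⟩ := eigDesc_hermitian hA
  set b := hA.eigenvectorBasis with hb
  set μ := hA.eigenvalues with hμ
  -- the "low" eigenvector family
  set q : Fin (d - j) → ι := fun i => σ ⟨j + i.val, by omega⟩ with hq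
  have hqinj : Function.Injective q := by
    intro a b hab
    have := hσbij.injective hab
    have : j + a.val = j + b.val := congrArg Fin.val this
    omega
  set e : Fin (d - j) → EuclideanSpace ℂ ι := fun i => b (q i) with he
  have heon : Orthonormal ℂ e := (hA.eigenvectorBasis.orthonormal).comp q hqinj
  set W := Submodule.span ℂ (Set.range w) with hW
  set E := Submodule.span ℂ (Set.range e) with hE
  have hfinW : Module.finrank ℂ W = j + 1 := by
    rw [finrank_span_eq_card hw.linearIndependent, Fintype.card_fin]
  have hfinE : Module.finrank ℂ E = d - j := by
    rw [finrank_span_eq_card heon.linearIndependent, Fintype.card_fin]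
  have hfinV : Module.finrank ℂ (EuclideanSpace ℂ ι) = d := by simp [hd]
  have hne : W ⊓ E ≠ ⊥ := by
    intro hbot
    have h1 := Submodule.finrank_sup_add_finrank_inf_eq W E
    rw [hbot, finrank_bot, add_zero, hfinW, hfinE] at h1
    have h2 : Module.finrank ℂ ↥(W ⊔ E) ≤ d := hfinV ▸ Submodule.finrank_le _
    omega
  obtain ⟨x, hxmem, hxne⟩ := Submodule.exists_mem_ne_zero_of_ne_bot hne
  have hxW : x ∈ W := hxmem.1
  have hxE : x ∈ E := hxmem.2
  obtain ⟨γ, hγ⟩ := (Submodule.mem_span_range_iff_exists_fun ℂ).mp hxE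
  -- compute the Rayleigh quotient upper bound on E
  have hPx : Matrix.toEuclideanLin A x = ∑ i, (γ i * (μ (q i) : ℂ)) • e i := by
    rw [← hγ, map_sum]
    refine Finset.sum_congr rfl fun i _ => ?_
    rw [LinearMap.map_smul, he, toEuclideanLin_eigenvectorBasis hA, smul_smul]
  have hinner : ⟪x, Matrix.toEuclideanLin A x⟫_ℂ =
      ∑ i, (starRingEnd ℂ) (γ i) * (γ i * (μ (q i) : ℂ)) := by
    rw [hPx, ← hγ]
    exact heon.inner_sum γ (fun i => γ i * (μ (q i) : ℂ)) Finset.univ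
  have hnorm : ‖x‖ ^ 2 = ∑ i, Complex.normSq (γ i) := by
    have h1 : ⟪x, x⟫_ℂ = ∑ i, (starRingEnd ℂ) (γ i) * γ i := by
      rw [← hγ]; exact heon.inner_sum γ γ Finset.univ
    have h2 : (⟪x, x⟫_ℂ).re = ‖x‖ ^ 2 := by
      rw [inner_self_eq_norm_sq_to_K]; simp [← Complex.ofReal_pow]
    rw [← h2, h1]
    simp [Complex.normSq_eq_conj_mul_self, Complex.re_sum, Complex.normSq_apply]
  set t := μ (σ ⟨j, hj⟩) with ht
  have hmu_le : ∀ i : Fin (d - j), μ (q i) ≤ t := by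
    intro i
    exact hσanti (by simp [Fin.le_def] : (⟨j, hj⟩ : Fin d) ≤ ⟨j + i.val, by omega⟩)
  have hupper : (⟪x, Matrix.toEuclideanLin A x⟫_ℂ).re ≤ t * ‖x‖ ^ 2 := by
    rw [hinner, hnorm, Complex.re_sum, Finset.mul_sum]
    apply Finset.sum_le_sum
    intro i _
    have : ((starRingEnd ℂ) (γ i) * (γ i * (μ (q i) : ℂ))).re
        = Complex.normSq (γ i) * μ (q i) := by
      rw [← mul_assoc, ← Complex.normSq_eq_conj_mul_self]
      simp [Complex.ofReal_mul]
    rw [this]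
    have := Complex.normSq_nonneg (γ i)
    nlinarith [hmu_le i]
  have hlower := hray x hxW
  have hxnorm : (0:ℝ) < ‖x‖ := norm_pos_iff.mpr hxne
  have hxpos : (0:ℝ) < ‖x‖ ^ 2 := by positivity
  have : c * ‖x‖ ^ 2 ≤ t * ‖x‖ ^ 2 := le_trans hlower hupper
  have hct : c ≤ t := le_of_mul_le_mul_right (by linarith) hxpos
  rw [hσeig j hj]
  exact hct

lemma sum_dotProduct' {r : ℕ} {ι : Type*} [Fintype ι] (v : Fin r → ι → ℂ) (w : ι → ℂ) :
    (∑ i, v i) ⬝ᵥ w = ∑ i, v i ⬝ᵥ w := by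
  simp only [dotProduct, Finset.sum_apply, Finset.sum_mul]
  exact Finset.sum_comm

lemma dotProduct_sum' {r : ℕ} {ι : Type*} [Fintype ι] (w : ι → ℂ) (v : Fin r → ι → ℂ) :
    w ⬝ᵥ (∑ i, v i) = ∑ i, w ⬝ᵥ v i := by
  simp only [dotProduct, Finset.sum_apply, Finset.mul_sum]
  exact Finset.sum_comm

lemma dot_sum_sum {r : ℕ} {ι : Type*} [Fintype ι] (f g : Fin r → ι → ℂ)
    (a b t : Fin r → ℂ)
    (h : ∀ i k, star (f i) ⬝ᵥ g k = if i = k then t k else 0) :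
    star (∑ i, a i • f i) ⬝ᵥ (∑ k, b k • g k)
      = ∑ k, (starRingEnd ℂ) (a k) * b k * t k := by
  rw [star_sum, sum_dotProduct']
  have : ∀ i : Fin r, star (a i • f i) ⬝ᵥ (∑ k, b k • g k)
      = (starRingEnd ℂ) (a i) * b i * t i := by
    intro i
    rw [star_smul, smul_dotProduct, dotProduct_sum']
    have : ∀ k : Fin r, star (f i) ⬝ᵥ (b k • g k)
        = b k * (if i = k then t k else 0) := by
      intro k
      rw [dotProduct_smul, h i k]
      rfl
    rw [Finset.sum_congr rfl (fun k _ => this k)]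
    simp [Finset.mul_sum, mul_ite, Finset.sum_ite_eq, smul_eq_mul]
    ring
  rw [Finset.sum_congr rfl (fun i _ => this i)]

lemma inner_equiv_symm_aux {ι : Type*} [Fintype ι] (x y : ι → ℂ) :
    ⟪(WithLp.equiv 2 (ι → ℂ)).symm x, (WithLp.equiv 2 (ι → ℂ)).symm y⟫_ℂ = star x ⬝ᵥ y := by
  rw [dotProduct_comm]; rfl

end Aux

set_option maxHeartbeats 2000000 in
/-- Tao's theorem: the singular values of the off-diagonal block of a PSD block
matrix are dominated by half the eigenvalues of the whole matrix. -/
theorem tao_offdiagonal_block {m n : ℕ}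
    (M : Matrix (Fin m) (Fin m) ℂ) (N : Matrix (Fin n) (Fin n) ℂ)
    (K : Matrix (Fin m) (Fin n) ℂ)
    (hZ : (Matrix.fromBlocks M K Kᴴ N).PosSemidef)
    (j : ℕ) (hj : j < min m n) :
    svalDesc K j ≤ (1 / 2) * eigDesc (Matrix.fromBlocks M K Kᴴ N) j := by
  classical
  have hjm : j < m := lt_of_lt_of_le hj (min_le_left _ _)
  have hjn : j < n := lt_of_lt_of_le hj (min_le_right _ _)
  set Z := Matrix.fromBlocks M K Kᴴ N with hZdef
  have hZh : Z.IsHermitian := hZ.1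
  have hH : (Kᴴ * K).PosSemidef := Matrix.posSemidef_conjTranspose_mul_self K
  have hHh : (Kᴴ * K).IsHermitian := hH.1
  obtain ⟨τ, hτbij, hτanti, hτeig⟩ := eigDesc_hermitian hHh
  have hjn' : j < Fintype.card (Fin n) := by simpa using hjn
  set s := hHh.eigenvalues (τ ⟨j, hjn'⟩) with hsdef
  have hsval : svalDesc K j = Real.sqrt s := by rw [svalDesc, hτeig j hjn']
  have hZd : j < Fintype.card (Fin m ⊕ Fin n) := by
    simp only [Fintype.card_sum, Fintype.card_fin]; omega
  obtain ⟨σZ, hbijZ, hantiZ, heigZ⟩ := eigDesc_hermitian hZh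
  have hRHS0 : 0 ≤ eigDesc Z j := by
    rw [heigZ j hZd]; exact hZ.eigenvalues_nonneg _
  by_cases hs : s ≤ 0
  · rw [hsval]
    have : Real.sqrt s = 0 := Real.sqrt_eq_zero'.mpr hs
    rw [this]; linarith
  push_neg at hs
  -- index family
  set p : Fin (j + 1) → Fin (Fintype.card (Fin n)) :=
    fun i => ⟨i.val, by have := i.2; omega⟩ with hp
  set ν : Fin (j + 1) → ℝ := fun i => hHh.eigenvalues (τ (p i)) with hν
  have hν_ge : ∀ i, s ≤ ν i := by
    intro i
    exact hτanti (by simp [hp, Fin.le_def]; omega)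
  have hνpos : ∀ i, 0 < ν i := fun i => lt_of_lt_of_le hs (hν_ge i)
  set si : Fin (j + 1) → ℝ := fun i => Real.sqrt (ν i) with hsi
  have hsipos : ∀ i, 0 < si i := fun i => Real.sqrt_pos.mpr (hνpos i)
  have hsisq : ∀ i, (si i) ^ 2 = ν i := fun i => Real.sq_sqrt (hνpos i).le
  have hsine : ∀ i, ((si i : ℂ)) ≠ 0 := fun i => by
    exact_mod_cast (Complex.ofReal_ne_zero).mpr (hsipos i).ne'
  have hsi_ge : ∀ i, Real.sqrt s ≤ si i := fun i => Real.sqrt_le_sqrt (hν_ge i)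
  -- the singular vector families
  set vf : Fin (j + 1) → (Fin n → ℂ) := fun i => ⇑(hHh.eigenvectorBasis (τ (p i))) with hvf
  have hpinj : Function.Injective (fun i : Fin (j+1) => τ (p i)) := by
    intro a b hab
    have h2 := hτbij.injective hab
    have h3 : (p a).val = (p b).val := congrArg Fin.val h2
    exact Fin.ext h3
  have hvv : ∀ i k, star (vf i) ⬝ᵥ vf k = if i = k then 1 else 0 := by
    intro i k
    have h1 := orthonormal_iff_ite.mp hHh.eigenvectorBasis.orthonormal (τ (p i)) (τ (p k))
    have h2 : ⟪hHh.eigenvectorBasis (τ (p i)), hHh.eigenvectorBasis (τ (p k))⟫_ℂ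
        = star (vf i) ⬝ᵥ vf k := by rw [dotProduct_comm]; rfl
    rw [h2] at h1
    rw [h1]
    by_cases hik : i = k
    · simp [hik]
    · rw [if_neg hik, if_neg (fun hc => hik (hpinj hc))]
  have hKKv : ∀ i, (Kᴴ * K) *ᵥ vf i = ((ν i : ℝ) : ℂ) • vf i := by
    intro i
    simpa [hν] using hHh.mulVec_eigenvectorBasis (τ (p i))
  set uf : Fin (j + 1) → (Fin m → ℂ) := fun i => ((si i : ℂ))⁻¹ • (K *ᵥ vf i) with huf
  have hKv : ∀ i, K *ᵥ vf i = (si i : ℂ) • uf i := by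
    intro i
    rw [huf]
    rw [smul_smul, mul_inv_cancel₀ (hsine i), one_smul]
  have hKHu : ∀ i, Kᴴ *ᵥ uf i = (si i : ℂ) • vf i := by
    intro i
    rw [huf, Matrix.mulVec_smul, Matrix.mulVec_mulVec, hKKv i, smul_smul]
    congr 1
    rw [← hsisq i]
    push_cast
    rw [sq]
    field_simp
  have huu : ∀ i k, star (uf i) ⬝ᵥ uf k = if i = k then 1 else 0 := by
    intro i k
    rw [huf]
    simp only [star_smul, smul_dotProduct, dotProduct_smul]
    rw [Matrix.star_mulVec, ← Matrix.dotProduct_mulVec, Matrix.mulVec_mulVec, hKKv k,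
      dotProduct_smul, hvv i k]
    rw [star_inv₀, Complex.star_def, Complex.conj_ofReal]
    by_cases hik : i = k
    · subst hik
      rw [if_pos rfl]
      rw [smul_eq_mul, smul_eq_mul, smul_eq_mul, mul_one]
      rw [← hsisq i]
      push_cast
      rw [sq]
      field_simp
      exact div_self (hsine i)
    · rw [if_neg hik]
      simp
  have huKv : ∀ i k, star (uf i) ⬝ᵥ (K *ᵥ vf k) = if i = k then (si k : ℂ) else 0 := by
    intro i k
    rw [hKv k, dotProduct_smul, huu i k]
    simp [mul_ite]
  have hvKHu : ∀ i k, star (vf i) ⬝ᵥ (Kᴴ *ᵥ uf k) = if i = k then (si k : ℂ) else 0 := by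
    intro i k
    rw [hKHu k, dotProduct_smul, hvv i k]
    simp [mul_ite]
  -- the test family in the big space
  set wf : Fin (j + 1) → (Fin m ⊕ Fin n → ℂ) := fun i => Sum.elim (uf i) (vf i) with hwf
  have hww : ∀ i k, star (wf i) ⬝ᵥ wf k = if i = k then 2 else 0 := by
    intro i k
    rw [hwf]
    simp only [Function.star_sumElim, sumElim_dotProduct_sumElim, huu i k, hvv i k]
    split <;> norm_num
  set w : Fin (j + 1) → EuclideanSpace ℂ (Fin m ⊕ Fin n) :=
    fun i => ((Real.sqrt 2 : ℂ))⁻¹ • (WithLp.equiv 2 _).symm (wf i) with hw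
  have hsqrt2 : ((Real.sqrt 2 : ℂ))⁻¹ * ((Real.sqrt 2 : ℂ))⁻¹ = (2 : ℂ)⁻¹ := by
    rw [← mul_inv]
    rw [← Complex.ofReal_mul, Real.mul_self_sqrt (by norm_num)]
    norm_num
  have hwinner : ∀ i k, ⟪w i, w k⟫_ℂ = if i = k then 1 else 0 := by
    intro i k
    rw [hw]
    simp only [inner_smul_left, inner_smul_right]
    rw [inner_equiv_symm_aux, hww i k]
    rw [map_inv₀, Complex.conj_ofReal]
    split
    · rw [← mul_assoc, hsqrt2]
      norm_num
    · simp
  have hwon : Orthonormal ℂ w := by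
    rw [orthonormal_iff_ite]
    intro i k
    simpa using hwinner i k
  -- the Rayleigh bound
  have key : ∀ x : EuclideanSpace ℂ (Fin m ⊕ Fin n),
      x ∈ Submodule.span ℂ (Set.range w) →
      (2 * Real.sqrt s) * ‖x‖ ^ 2 ≤ (⟪x, Matrix.toEuclideanLin Z x⟫_ℂ).re := by
    intro x hx
    obtain ⟨γ, hγ⟩ := (Submodule.mem_span_range_iff_exists_fun ℂ).mp hx
    set cc : Fin (j + 1) → ℂ := fun i => ((Real.sqrt 2 : ℂ))⁻¹ * γ i with hcc
    set U : Fin m → ℂ := ∑ i, cc i • uf i with hUdef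
    set V : Fin n → ℂ := ∑ i, cc i • vf i with hVdef
    have hxf : (WithLp.equiv 2 (Fin m ⊕ Fin n → ℂ)) x = Sum.elim U V := by
      rw [← hγ]
      funext z
      have hz : ∀ i : Fin (j+1), ∀ z, (γ i • w i) z = cc i * wf i z := by
        intro i z
        rw [hw]
        simp [smul_smul, hcc]
        exact Or.inl (mul_comm _ _)
      cases z with
      | inl a =>
        have : (∑ i, γ i • w i) (Sum.inl a) = ∑ i, (γ i • w i) (Sum.inl a) := by
          rw [WithLp.ofLp_sum, Finset.sum_apply]
        rw [show (WithLp.equiv 2 (Fin m ⊕ Fin n → ℂ)) (∑ i, γ i • w i) (Sum.inl a)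
            = (∑ i, γ i • w i) (Sum.inl a) from rfl, this]
        simp only [hz, hwf, Sum.elim_inl, hUdef, Finset.sum_apply, Pi.smul_apply, smul_eq_mul]
      | inr a =>
        have : (∑ i, γ i • w i) (Sum.inr a) = ∑ i, (γ i • w i) (Sum.inr a) := by
          rw [WithLp.ofLp_sum, Finset.sum_apply]
        rw [show (WithLp.equiv 2 (Fin m ⊕ Fin n → ℂ)) (∑ i, γ i • w i) (Sum.inr a)
            = (∑ i, γ i • w i) (Sum.inr a) from rfl, this]
        simp only [hz, hwf, Sum.elim_inr, hVdef, Finset.sum_apply, Pi.smul_apply, smul_eq_mul]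
    have hkey : ⟪x, Matrix.toEuclideanLin Z x⟫_ℂ
        = star (Sum.elim U V) ⬝ᵥ (Z *ᵥ Sum.elim U V) := by
      rw [Matrix.toEuclideanLin_apply, show x.ofLp = Sum.elim U V from hxf]
      conv_lhs => rw [show x = (WithLp.equiv 2 (Fin m ⊕ Fin n → ℂ)).symm (Sum.elim U V) by
        rw [← hxf]; simp]
      exact inner_equiv_symm_aux _ _
    -- norm of x
    have hnormx : ‖x‖ ^ 2 = ∑ i, Complex.normSq (γ i) := by
      have h1 : ⟪x, x⟫_ℂ = ∑ i, (starRingEnd ℂ) (γ i) * γ i := by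
        rw [← hγ]; exact hwon.inner_sum γ γ Finset.univ
      have h2 : (⟪x, x⟫_ℂ).re = ‖x‖ ^ 2 := by
        rw [inner_self_eq_norm_sq_to_K]; simp [← Complex.ofReal_pow]
      rw [← h2, h1]
      simp [Complex.normSq_eq_conj_mul_self, Complex.re_sum, Complex.normSq_apply]
    -- mulVec of sums
    have hmvsum : ∀ {a b : ℕ} (A : Matrix (Fin a) (Fin b) ℂ) (v : Fin (j+1) → Fin b → ℂ),
        A *ᵥ (∑ i, cc i • v i) = ∑ i, cc i • (A *ᵥ v i) := by
      intro a b A v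
      rw [← Matrix.mulVecLin_apply, map_sum]
      simp [Matrix.mulVecLin_apply]
    have ha : star U ⬝ᵥ (K *ᵥ V) = ∑ k, (starRingEnd ℂ) (cc k) * cc k * (si k : ℂ) := by
      rw [hVdef, hmvsum K vf, hUdef]
      exact dot_sum_sum uf (fun k => K *ᵥ vf k) cc cc (fun k => (si k : ℂ)) huKv
    have hb : star V ⬝ᵥ (Kᴴ *ᵥ U) = ∑ k, (starRingEnd ℂ) (cc k) * cc k * (si k : ℂ) := by
      rw [hUdef, hmvsum Kᴴ uf, hVdef]
      exact dot_sum_sum vf (fun k => Kᴴ *ᵥ uf k) cc cc (fun k => (si k : ℂ)) hvKHu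
    have hre_sum : (∑ k, (starRingEnd ℂ) (cc k) * cc k * (si k : ℂ)).re
        = ∑ k, Complex.normSq (cc k) * si k := by
      rw [Complex.re_sum]
      refine Finset.sum_congr rfl fun k _ => ?_
      rw [← Complex.normSq_eq_conj_mul_self, ← Complex.ofReal_mul, Complex.ofReal_re]
    -- positivity from PSD applied to (U, -V)
    have hpsd := hZ.dotProduct_mulVec_nonneg (Sum.elim U (-V))
    have hneg : star (Sum.elim U (-V)) ⬝ᵥ (Z *ᵥ Sum.elim U (-V))
        = star U ⬝ᵥ (M *ᵥ U) + star V ⬝ᵥ (N *ᵥ V)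
          - (star U ⬝ᵥ (K *ᵥ V) + star V ⬝ᵥ (Kᴴ *ᵥ U)) := by
      have hfb := Matrix.fromBlocks_mulVec M K Kᴴ N (Sum.elim U (-V))
      simp only [Sum.elim_comp_inl, Sum.elim_comp_inr] at hfb
      rw [hfb]
      rw [Function.star_sumElim, sumElim_dotProduct_sumElim]
      rw [Matrix.mulVec_neg, Matrix.mulVec_neg]
      simp only [dotProduct_add, dotProduct_neg, neg_dotProduct, star_neg]
      ring
    have hsplit : star (Sum.elim U V) ⬝ᵥ (Z *ᵥ Sum.elim U V)
        = star U ⬝ᵥ (M *ᵥ U) + star V ⬝ᵥ (N *ᵥ V)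
          + (star U ⬝ᵥ (K *ᵥ V) + star V ⬝ᵥ (Kᴴ *ᵥ U)) := by
      have hfb := Matrix.fromBlocks_mulVec M K Kᴴ N (Sum.elim U V)
      simp only [Sum.elim_comp_inl, Sum.elim_comp_inr] at hfb
      rw [hfb]
      rw [Function.star_sumElim, sumElim_dotProduct_sumElim]
      simp only [dotProduct_add]
      ring
    have hpsd_re : 0 ≤ (star U ⬝ᵥ (M *ᵥ U) + star V ⬝ᵥ (N *ᵥ V)
        - (star U ⬝ᵥ (K *ᵥ V) + star V ⬝ᵥ (Kᴴ *ᵥ U))).re := by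
      rw [← hneg]
      exact (Complex.le_def.mp hpsd).1
    set Scc : ℝ := ∑ k, Complex.normSq (cc k) * si k with hScc
    set Tcc : ℝ := ∑ k, Complex.normSq (cc k) with hTcc
    have hT : Tcc = (1 / 2) * ‖x‖ ^ 2 := by
      rw [hnormx, hTcc, Finset.mul_sum]
      refine Finset.sum_congr rfl fun k _ => ?_
      rw [hcc, Complex.normSq_mul]
      have : Complex.normSq (((Real.sqrt 2 : ℂ))⁻¹) = 1 / 2 := by
        rw [Complex.normSq_inv, Complex.normSq_ofReal, Real.mul_self_sqrt (by norm_num)]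
        norm_num
      rw [this]
    have hSge : Real.sqrt s * Tcc ≤ Scc := by
      rw [hScc, hTcc, Finset.mul_sum]
      refine Finset.sum_le_sum fun k _ => ?_
      have h1 := Complex.normSq_nonneg (cc k)
      have h2 := hsi_ge k
      nlinarith
    have htotal : (⟪x, Matrix.toEuclideanLin Z x⟫_ℂ).re
        = ((star U ⬝ᵥ (M *ᵥ U)).re + (star V ⬝ᵥ (N *ᵥ V)).re) + 2 * Scc := by
      rw [hkey, hsplit]
      simp only [Complex.add_re]
      rw [ha, hb, hre_sum]
      ring
    have hMN : 2 * Scc ≤ (star U ⬝ᵥ (M *ᵥ U)).re + (star V ⬝ᵥ (N *ᵥ V)).re := by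
      simp only [Complex.sub_re, Complex.add_re] at hpsd_re
      rw [ha, hb, hre_sum] at hpsd_re
      linarith
    have hSpos : 0 ≤ Scc := by
      rw [hScc]
      refine Finset.sum_nonneg fun k _ => ?_
      exact mul_nonneg (Complex.normSq_nonneg _) (hsipos k).le
    rw [htotal]
    have hs' : (0:ℝ) ≤ Real.sqrt s := Real.sqrt_nonneg s
    nlinarith [hT, hSge, hMN]
  have hfinal := cf_lower hZh hZd w hwon key
  rw [hsval]
  linarith
end
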